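/- (Singular case, contribution of constant words.) Assume p₁ = 0 and p₂,…,pₙ ∈ D_Δ are distinct, nonzero, and (p₁,…,pₙ) satisfies the Bethe equations. Fix 1 ≤ x₁ < … < xₙ ≤ N, x₀ = xₙ − N, and set Π_M = Π_{k=2}^n M(z_k). For ε ∉ {0,p₂,…,pₙ}, let r_σ^ε(w) and Z_σ^ε(w) be defined as r_σ(w), Z_σ(w) but with p₁ replaced by ε (so z₁ replaced by e^{iε}), and T₀(ε) = Σ_{w ∈ {L⋯L, M⋯M}} Σ_{σ∈S_n} A_σ r_σ^ε(w) Z_σ^ε(w). Then lim_{ε→0} T₀(ε) = (2 − c²) Π_M ψ(x) + c²N Π_M Σ_{σ∈S_n : σ(n)=1} A_σ Π_{k=1}^n z_{σ(k)}^{x_k}. -/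

import Mathlib

open scoped BigOperators
open Complex

noncomputable section

/-- `S(x,y) = e^{-ix} + e^{iy} - 2*Delta`. -/
def Sfun (Δ x y : ℝ) : ℂ :=
  Complex.exp (-(Complex.I * (x : ℂ))) + Complex.exp (Complex.I * (y : ℂ)) - 2 * (Δ : ℂ)

/-- `μ`, the unique solution of `cos μ = -Δ` in `[0, π)` when `Δ ∈ [-1, 1)`, and `0` when `Δ < -1`. -/
def muD (Δ : ℝ) : ℝ := if -1 ≤ Δ then Real.arccos (-Δ) else 0

/-- `D_Δ = (-π + μ, π - μ)`. -/
def Ddom (Δ : ℝ) : Set ℝ := Set.Ioo (-Real.pi + muD Δ) (Real.pi - muD Δ)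

/-- `L(z) = 1 + c²z/(1-z)`. -/
def Lfun (c : ℝ) (z : ℂ) : ℂ := 1 + (c : ℂ) ^ 2 * z / (1 - z)

/-- `M(z) = 1 - c²/(1-z)`. -/
def Mfun (c : ℝ) (z : ℂ) : ℂ := 1 - (c : ℂ) ^ 2 / (1 - z)

/-- `z_j = e^{i p_j}`. -/
def zOf {n : ℕ} (p : Fin n → ℝ) : Fin n → ℂ := fun j => Complex.exp (Complex.I * (p j : ℂ))

/-- The coefficient `A_σ`. -/
def Acoef {n : ℕ} (Δ : ℝ) (p : Fin n → ℝ) (σ : Equiv.Perm (Fin n)) : ℂ :=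
  ((Equiv.Perm.sign σ : ℤ) : ℂ) *
    ∏ kl ∈ Finset.univ.filter (fun kl : Fin n × Fin n => kl.1 < kl.2),
      Complex.exp (Complex.I * (p (σ kl.1) : ℂ)) * Sfun Δ (p (σ kl.1)) (p (σ kl.2))

/-- `Z_σ(w)`; the letter `L` is encoded by `true` and the letter `M` by `false`. -/
def Zword {n : ℕ} (x : ℕ → ℤ) (z : Fin n → ℂ) (σ : Equiv.Perm (Fin n))
    (w : Fin n → Bool) : ℂ :=
  ∏ k : Fin n, if w k then z (σ k) ^ (x (k : ℕ)) else z (σ k) ^ (x ((k : ℕ) + 1))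

/-- `r_σ(w)`; the letter `L` is encoded by `true` and the letter `M` by `false`;
cyclic successor and predecessor of indices are given by `finRotate`. -/
def rword {n : ℕ} (c : ℝ) (z : Fin n → ℂ) (σ : Equiv.Perm (Fin n))
    (w : Fin n → Bool) : ℂ :=
  (∏ k : Fin n, if w k = false ∧ w (finRotate n k) = true then
      Mfun c (z (σ k)) * Lfun c (z (σ (finRotate n k))) - 1 else 1) *
  (∏ k : Fin n, if w ((finRotate n).symm k) = true ∧ w k = true then
      Lfun c (z (σ k)) else 1) *
  (∏ k : Fin n, if w k = false ∧ w (finRotate n k) = false then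
      Mfun c (z (σ k)) else 1)


-- ### auxiliary lemmas

lemma rword_true {n : ℕ} (c : ℝ) (z : Fin n → ℂ) (σ : Equiv.Perm (Fin n)) :
    rword c z σ (fun _ => true) = ∏ j : Fin n, Lfun c (z j) := by
  simp [rword, ← Equiv.prod_comp σ (fun j => Lfun c (z j))]

lemma rword_false {n : ℕ} (c : ℝ) (z : Fin n → ℂ) (σ : Equiv.Perm (Fin n)) :
    rword c z σ (fun _ => false) = ∏ j : Fin n, Mfun c (z j) := by
  simp [rword, ← Equiv.prod_comp σ (fun j => Mfun c (z j))]

lemma LM_sum {c : ℝ} {z : ℂ} (hz : z ≠ 1) : Lfun c z + Mfun c z = 2 - (c:ℂ)^2 := by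
  have h : (1:ℂ) - z ≠ 0 := by intro h; apply hz; linear_combination -h
  unfold Lfun Mfun
  field_simp [Lfun, Mfun]
  ring

lemma LM_sing {c : ℝ} {z w : ℂ} (hz : z ≠ 1) :
    Lfun c z * w + Mfun c z = (1 + w) + (c:ℂ)^2 * (z * w - 1) / (1 - z) := by
  have h : (1:ℂ) - z ≠ 0 := by intro h; apply hz; linear_combination -h
  unfold Lfun Mfun
  field_simp [Lfun, Mfun]
  ring

lemma gtend (N : ℕ) :
    Filter.Tendsto
      (fun w : ℂ => (Complex.exp (((1:ℂ) - N) * I * w) - 1) / (1 - Complex.exp (I * w)))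
      (nhdsWithin 0 {(0:ℂ)}ᶜ) (nhds ((N:ℂ) - 1)) := by
  set a : ℂ := ((1:ℂ) - N) * I with ha
  have h1 : HasDerivAt (fun w : ℂ => Complex.exp (a * w)) a 0 := by
    simpa using ((hasDerivAt_id (0:ℂ)).const_mul a).cexp
  have h2 : HasDerivAt (fun w : ℂ => Complex.exp (I * w)) I 0 := by
    simpa using ((hasDerivAt_id (0:ℂ)).const_mul I).cexp
  have t1 := hasDerivAt_iff_tendsto_slope.mp h1
  have t2 := hasDerivAt_iff_tendsto_slope.mp h2
  have hdiv : Filter.Tendsto (fun w : ℂ => -(slope (fun w : ℂ => Complex.exp (a * w)) 0 w) /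
      slope (fun w : ℂ => Complex.exp (I * w)) 0 w) (nhdsWithin 0 {(0:ℂ)}ᶜ)
      (nhds (-a / I)) := (t1.neg).div t2 I_ne_zero
  have hval : -a / I = (N:ℂ) - 1 := by
    rw [ha, neg_div, mul_div_cancel_right₀ _ Complex.I_ne_zero]; ring
  rw [hval] at hdiv
  refine hdiv.congr' ?_
  filter_upwards [self_mem_nhdsWithin] with w hw
  have hw0 : w ≠ 0 := hw
  simp only [slope_def_field, sub_zero, mul_zero, Complex.exp_zero]
  rw [show (1:ℂ) - Complex.exp (I*w) = -(Complex.exp (I*w) - 1) by ring]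
  set A := Complex.exp (a*w) - 1
  set B := Complex.exp (I*w) - 1
  rw [div_neg]
  by_cases hBz : B = 0
  · simp [hBz]
  · rw [neg_div, neg_inj]
    field_simp

set_option linter.unnecessarySeqFocus false in
lemma pairprod {m : ℕ} (f : Fin (m+1) → Fin (m+1) → ℂ)
    (hf : ∀ i, f i (Fin.last m) ≠ 0) :
    (∏ q ∈ Finset.univ.filter (fun q : Fin (m+1) × Fin (m+1) => q.1 < q.2),
        f ((finRotate (m+1))⁻¹ q.1) ((finRotate (m+1))⁻¹ q.2))
      = (∏ q ∈ Finset.univ.filter (fun q : Fin (m+1) × Fin (m+1) => q.1 < q.2), f q.1 q.2) *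
        ∏ i ∈ Finset.univ.erase (Fin.last m), (f (Fin.last m) i / f i (Fin.last m)) := by
  classical
  set ρ := finRotate (m+1) with hρdef
  have hval : ∀ k : Fin (m+1), (ρ k : ℕ) = if k = Fin.last m then 0 else (k : ℕ) + 1 :=
    fun k => coe_finRotate k
  have hlast : ∀ k : Fin (m+1), k = Fin.last m ↔ (k : ℕ) = m := by
    intro k; rw [Fin.ext_iff, Fin.val_last]
  have step1 : (∏ q ∈ Finset.univ.filter (fun q : Fin (m+1) × Fin (m+1) => q.1 < q.2),
        f (ρ⁻¹ q.1) (ρ⁻¹ q.2))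
      = ∏ q ∈ Finset.univ.filter (fun q : Fin (m+1) × Fin (m+1) => ρ q.1 < ρ q.2),
          f q.1 q.2 := by
    refine Finset.prod_nbij' (fun q => (ρ⁻¹ q.1, ρ⁻¹ q.2)) (fun q => (ρ q.1, ρ q.2)) ?_ ?_ ?_ ?_ ?_
    · intro q hq; simp only [Finset.mem_filter, Finset.mem_univ, true_and] at hq ⊢
      simpa using hq
    · intro q hq; simp only [Finset.mem_filter, Finset.mem_univ, true_and] at hq ⊢
      simpa using hq
    · intro q _; simp
    · intro q _; simp
    · intro q _; rfl
  rw [step1]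
  rw [← Finset.prod_filter_mul_prod_filter_not
      (Finset.univ.filter (fun q : Fin (m+1) × Fin (m+1) => ρ q.1 < ρ q.2))
      (fun q => q.1 = Fin.last m) (fun q => f q.1 q.2),
    ← Finset.prod_filter_mul_prod_filter_not
      (Finset.univ.filter (fun q : Fin (m+1) × Fin (m+1) => q.1 < q.2))
      (fun q => q.2 = Fin.last m) (fun q => f q.1 q.2)]
  have hsets : ((Finset.univ.filter (fun q : Fin (m+1) × Fin (m+1) => ρ q.1 < ρ q.2)).filter
        (fun q => ¬ q.1 = Fin.last m))
      = ((Finset.univ.filter (fun q : Fin (m+1) × Fin (m+1) => q.1 < q.2)).filter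
        (fun q => ¬ q.2 = Fin.last m)) := by
    ext q
    simp only [Finset.mem_filter, Finset.mem_univ, true_and, Fin.lt_def, hval, hlast]
    have h1 := q.1.isLt
    have h2 := q.2.isLt
    by_cases e1 : (q.1 : ℕ) = m <;> by_cases e2 : (q.2 : ℕ) = m <;> simp [e1, e2] <;> omega
  rw [hsets]
  have part1 : (∏ q ∈ (Finset.univ.filter
        (fun q : Fin (m+1) × Fin (m+1) => ρ q.1 < ρ q.2)).filter
        (fun q => q.1 = Fin.last m), f q.1 q.2)
      = ∏ i ∈ Finset.univ.erase (Fin.last m), f (Fin.last m) i := by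
    refine Finset.prod_nbij' (fun q => q.2) (fun i => (Fin.last m, i)) ?_ ?_ ?_ ?_ ?_
    · intro q hq
      simp only [Finset.mem_filter, Finset.mem_univ, true_and, Finset.mem_erase] at hq ⊢
      obtain ⟨hlt, h1⟩ := hq
      rw [h1] at hlt
      rw [Fin.lt_def, hval, hval] at hlt
      simp only [if_pos rfl] at hlt
      refine ⟨fun h => ?_, trivial⟩
      rw [h] at hlt; simp at hlt
    · intro i hi
      simp only [Finset.mem_erase, Finset.mem_univ, and_true] at hi
      simp only [Finset.mem_filter, Finset.mem_univ, true_and]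
      refine ⟨?_, trivial⟩
      rw [Fin.lt_def, hval, hval, if_pos rfl, if_neg hi]
      omega
    · intro q hq
      simp only [Finset.mem_filter, Finset.mem_univ, true_and] at hq
      exact Prod.ext hq.2.symm rfl
    · intro i _; rfl
    · intro q hq
      simp only [Finset.mem_filter, Finset.mem_univ, true_and] at hq
      rw [hq.2]
  have part2 : (∏ q ∈ (Finset.univ.filter
        (fun q : Fin (m+1) × Fin (m+1) => q.1 < q.2)).filter
        (fun q => q.2 = Fin.last m), f q.1 q.2)
      = ∏ i ∈ Finset.univ.erase (Fin.last m), f i (Fin.last m) := by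
    refine Finset.prod_nbij' (fun q => q.1) (fun i => (i, Fin.last m)) ?_ ?_ ?_ ?_ ?_
    · intro q hq
      simp only [Finset.mem_filter, Finset.mem_univ, true_and, Finset.mem_erase] at hq ⊢
      obtain ⟨hlt, h2⟩ := hq
      rw [h2] at hlt
      exact ⟨ne_of_lt hlt, trivial⟩
    · intro i hi
      simp only [Finset.mem_erase, Finset.mem_univ, and_true] at hi
      simp only [Finset.mem_filter, Finset.mem_univ, true_and]
      exact ⟨Fin.lt_last_iff_ne_last.2 hi, trivial⟩
    · intro q hq
      simp only [Finset.mem_filter, Finset.mem_univ, true_and] at hq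
      exact Prod.ext rfl hq.2.symm
    · intro i _; rfl
    · intro q hq
      simp only [Finset.mem_filter, Finset.mem_univ, true_and] at hq
      rw [hq.2]
  rw [part1, part2, Finset.prod_div_distrib]
  have hne : (∏ i ∈ Finset.univ.erase (Fin.last m), f i (Fin.last m)) ≠ 0 :=
    Finset.prod_ne_zero_iff.2 fun i _ => hf i
  field_simp

lemma Aratio {m : ℕ} (N : ℕ) (Δ : ℝ) (Θ : ℝ → ℝ → ℝ) (p : Fin (m+1) → ℝ)
    (hSne : ∀ a b : Fin (m+1), Sfun Δ (p a) (p b) ≠ 0)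
    (hfac : ∀ a b : Fin (m+1),
      Complex.exp (Complex.I * (p a : ℂ)) * Sfun Δ (p a) (p b) /
        (Complex.exp (Complex.I * (p b : ℂ)) * Sfun Δ (p b) (p a)) =
        Complex.exp (-(Complex.I * ((Θ (p a) (p b) : ℝ) : ℂ))))
    (hBE : ∀ j, Complex.exp (Complex.I * (N : ℂ) * (p j : ℂ)) =
      (-1 : ℂ) ^ m *
        Complex.exp (-(Complex.I * ((∑ k, Θ (p j) (p k) : ℝ) : ℂ))))
    (σ : Equiv.Perm (Fin (m+1))) :
    Acoef Δ p (σ * (finRotate (m+1))⁻¹) =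
      Acoef Δ p σ * Complex.exp (Complex.I * (N : ℂ) * (p (σ (Fin.last m)) : ℂ)) := by
  set ρ := finRotate (m+1) with hρ
  set f : Fin (m+1) → Fin (m+1) → ℂ :=
    fun a b => Complex.exp (Complex.I * (p (σ a) : ℂ)) * Sfun Δ (p (σ a)) (p (σ b)) with hfdef
  have hf : ∀ i, f i (Fin.last m) ≠ 0 :=
    fun i => mul_ne_zero (Complex.exp_ne_zero _) (hSne _ _)
  have hsign : ((Equiv.Perm.sign (σ * ρ⁻¹) : ℤ) : ℂ) =
      ((Equiv.Perm.sign σ : ℤ) : ℂ) * (-1) ^ m := by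
    rw [hρ]
    simp [Equiv.Perm.sign_mul, Equiv.Perm.sign_inv, sign_finRotate]
  have hprod : (∏ kl ∈ Finset.univ.filter (fun kl : Fin (m+1) × Fin (m+1) => kl.1 < kl.2),
        Complex.exp (Complex.I * (p ((σ * ρ⁻¹) kl.1) : ℂ)) *
          Sfun Δ (p ((σ * ρ⁻¹) kl.1)) (p ((σ * ρ⁻¹) kl.2)))
      = (∏ kl ∈ Finset.univ.filter (fun kl : Fin (m+1) × Fin (m+1) => kl.1 < kl.2),
          Complex.exp (Complex.I * (p (σ kl.1) : ℂ)) * Sfun Δ (p (σ kl.1)) (p (σ kl.2))) *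
        ∏ i ∈ Finset.univ.erase (Fin.last m),
          (f (Fin.last m) i / f i (Fin.last m)) := by
    rw [← pairprod f hf]
    rfl
  have hratio : (∏ i ∈ Finset.univ.erase (Fin.last m),
        (f (Fin.last m) i / f i (Fin.last m)))
      = Complex.exp (-(Complex.I * ((∑ k, Θ (p (σ (Fin.last m))) (p k) : ℝ) : ℂ))) := by
    have hext : (∏ i : Fin (m+1), (f (Fin.last m) i / f i (Fin.last m)))
        = ∏ i ∈ Finset.univ.erase (Fin.last m), (f (Fin.last m) i / f i (Fin.last m)) := by
      rw [← Finset.mul_prod_erase Finset.univ _ (Finset.mem_univ (Fin.last m)),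
        div_self (hf (Fin.last m)), one_mul]
    rw [← hext]
    have hcomp : (∏ i : Fin (m+1), (f (Fin.last m) i / f i (Fin.last m)))
        = ∏ j : Fin (m+1),
            (Complex.exp (Complex.I * (p (σ (Fin.last m)) : ℂ)) *
                Sfun Δ (p (σ (Fin.last m))) (p j) /
              (Complex.exp (Complex.I * (p j : ℂ)) * Sfun Δ (p j) (p (σ (Fin.last m))))) := by
      exact Equiv.prod_comp σ (fun j =>
        Complex.exp (Complex.I * (p (σ (Fin.last m)) : ℂ)) * Sfun Δ (p (σ (Fin.last m))) (p j) /
          (Complex.exp (Complex.I * (p j : ℂ)) * Sfun Δ (p j) (p (σ (Fin.last m)))))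
    rw [hcomp]
    have heach : ∀ j : Fin (m+1),
        Complex.exp (Complex.I * (p (σ (Fin.last m)) : ℂ)) * Sfun Δ (p (σ (Fin.last m))) (p j) /
          (Complex.exp (Complex.I * (p j : ℂ)) * Sfun Δ (p j) (p (σ (Fin.last m)))) =
        Complex.exp (-(Complex.I * ((Θ (p (σ (Fin.last m))) (p j) : ℝ) : ℂ))) :=
      fun j => hfac (σ (Fin.last m)) j
    rw [Finset.prod_congr rfl (fun j _ => heach j), ← Complex.exp_sum]
    congr 1
    push_cast
    rw [Finset.mul_sum, ← Finset.sum_neg_distrib]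
  calc Acoef Δ p (σ * ρ⁻¹)
      = ((Equiv.Perm.sign σ : ℤ) : ℂ) *
          (∏ kl ∈ Finset.univ.filter (fun kl : Fin (m+1) × Fin (m+1) => kl.1 < kl.2),
            Complex.exp (Complex.I * (p (σ kl.1) : ℂ)) * Sfun Δ (p (σ kl.1)) (p (σ kl.2))) *
          ((-1) ^ m *
            Complex.exp (-(Complex.I * ((∑ k, Θ (p (σ (Fin.last m))) (p k) : ℝ) : ℂ)))) := by
        rw [Acoef, hsign, hprod, hratio]; ring
    _ = Acoef Δ p σ * Complex.exp (Complex.I * (N : ℂ) * (p (σ (Fin.last m)) : ℂ)) := by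
        rw [← hBE (σ (Fin.last m)), Acoef]

lemma rotate_last {m : ℕ} : finRotate (m+1) (Fin.last m) = 0 := by
  apply Fin.ext; rw [coe_finRotate]; simp

lemma Zshift {m : ℕ} (N : ℕ) (x : ℕ → ℤ) (hx0 : x 0 = x (m+1) - N)
    (z : Fin (m+1) → ℂ) (hz : ∀ j, z j ≠ 0) (σ : Equiv.Perm (Fin (m+1))) :
    Zword x z σ (fun _ => true) =
      z (σ 0) ^ (-(N:ℤ)) * Zword x z (σ * finRotate (m+1)) (fun _ => false) := by
  set ρ := finRotate (m+1) with hρ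
  have h1 : Zword x z σ (fun _ => true) = ∏ k : Fin (m+1), z (σ (ρ k)) ^ (x ((ρ k : ℕ))) := by
    rw [Zword]
    simp only [if_true]
    exact (Equiv.prod_comp ρ (fun k => z (σ k) ^ (x (k : ℕ)))).symm
  have h2 : Zword x z (σ * ρ) (fun _ => false) =
      ∏ k : Fin (m+1), z (σ (ρ k)) ^ (x ((k : ℕ) + 1)) := by
    rw [Zword]
    simp [Equiv.Perm.mul_apply]
  rw [h1, h2,
    ← Finset.mul_prod_erase Finset.univ _ (Finset.mem_univ (Fin.last m)),
    ← Finset.mul_prod_erase Finset.univ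
      (fun k : Fin (m+1) => z (σ (ρ k)) ^ (x ((k : ℕ) + 1))) (Finset.mem_univ (Fin.last m))]
  have herase : ∀ k ∈ Finset.univ.erase (Fin.last m),
      z (σ (ρ k)) ^ (x ((ρ k : ℕ))) = z (σ (ρ k)) ^ (x ((k : ℕ) + 1)) := by
    intro k hk
    rw [coe_finRotate_of_ne_last (Finset.mem_erase.mp hk).1]
  rw [Finset.prod_congr rfl herase, rotate_last, Fin.val_last]
  rw [show ((0 : Fin (m+1)) : ℕ) = 0 from rfl, hx0]
  rw [sub_eq_add_neg, zpow_add₀ (hz (σ 0))]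
  ring

lemma exp_I_ne_one {θ : ℝ} (h0 : θ ≠ 0) (h1 : |θ| < 2*Real.pi) :
    Complex.exp (Complex.I * θ) ≠ 1 := by
  intro h
  rw [Complex.exp_eq_one_iff] at h
  obtain ⟨k, hk⟩ := h
  have hθ : (θ : ℂ) = ((k : ℝ) * (2*Real.pi) : ℝ) := by
    push_cast
    exact mul_left_cancel₀ Complex.I_ne_zero (by linear_combination hk)
  have hθ' : θ = (k : ℝ) * (2*Real.pi) := by exact_mod_cast hθ
  rcases eq_or_ne k 0 with rfl | hk0
  · simp at hθ'; exact h0 hθ'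
  · have h1k : (1:ℝ) ≤ |(k:ℝ)| := by exact_mod_cast Int.one_le_abs hk0
    rw [hθ', abs_mul] at h1
    have hπ := Real.pi_pos
    rw [abs_of_pos (by linarith : (0:ℝ) < 2*Real.pi)] at h1
    nlinarith

lemma Sfun_b0 {c Δ : ℝ} (hΔ : Δ = (2 - c^2)/2) (b : ℝ) :
    Sfun Δ b 0 = (Complex.exp (Complex.I * b))⁻¹ + ((c:ℂ)^2 - 1) := by
  rw [Sfun, ← Complex.exp_neg, hΔ]
  push_cast
  ring_nf
  simp [Complex.exp_zero]
  ring

lemma Lfun_factor {c Δ : ℝ} (hΔ : Δ = (2 - c^2)/2) {b : ℝ}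
    (hz1 : Complex.exp (Complex.I * b) ≠ 1) :
    Lfun c (Complex.exp (Complex.I * b)) * (1 - Complex.exp (Complex.I * b)) =
      Complex.exp (Complex.I * b) * Sfun Δ b 0 := by
  have hz0 := Complex.exp_ne_zero (Complex.I * (b:ℂ))
  have h1z : (1:ℂ) - Complex.exp (Complex.I * b) ≠ 0 := sub_ne_zero.mpr (Ne.symm hz1)
  rw [Sfun_b0 hΔ, Lfun]
  field_simp
  ring

lemma Lfun_ne {c Δ : ℝ} (hΔ : Δ = (2 - c^2)/2) {b : ℝ}
    (hz1 : Complex.exp (Complex.I * b) ≠ 1) (hS : Sfun Δ b 0 ≠ 0) :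
    Lfun c (Complex.exp (Complex.I * b)) ≠ 0 := by
  intro h
  have h2 := Lfun_factor hΔ (c := c) hz1
  rw [h, zero_mul] at h2
  exact mul_ne_zero (Complex.exp_ne_zero _) hS h2.symm

lemma MLkey {c Δ : ℝ} (hΔ : Δ = (2 - c^2)/2) {b : ℝ}
    (hz1 : Complex.exp (Complex.I * b) ≠ 1) (hS : Sfun Δ b 0 ≠ 0) :
    Complex.exp (Complex.I * (((0:ℝ) : ℂ) - (b : ℂ))) * Sfun Δ 0 b / Sfun Δ b 0 =
      -(Mfun c (Complex.exp (Complex.I * b)) / Lfun c (Complex.exp (Complex.I * b))) := by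
  have hz0 := Complex.exp_ne_zero (Complex.I * (b:ℂ))
  have h1z : (1:ℂ) - Complex.exp (Complex.I * b) ≠ 0 := sub_ne_zero.mpr (Ne.symm hz1)
  have hL := Lfun_ne hΔ hz1 hS
  set z := Complex.exp (Complex.I * b) with hzdef
  have he : Complex.exp (Complex.I * (((0:ℝ) : ℂ) - (b : ℂ))) = z⁻¹ := by
    rw [show Complex.I * (((0:ℝ) : ℂ) - (b : ℂ)) = -(Complex.I * b) by push_cast; ring,
      Complex.exp_neg]
  have hS0b : Sfun Δ 0 b = 1 + z - 2*(Δ:ℂ) := by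
    rw [Sfun]
    push_cast
    simp [Complex.exp_zero]
    exact hzdef.symm
  rw [he, hS0b, ← neg_div, div_eq_div_iff hS hL]
  rw [Sfun_b0 hΔ, Lfun, Mfun, hΔ]
  push_cast
  field_simp
  ring

lemma Sne {Δ : ℝ} {Θ : ℝ → ℝ → ℝ}
    (hΘ : ∀ a ∈ Ddom Δ, ∀ b ∈ Ddom Δ,
      Complex.exp (-(Complex.I * (Θ a b : ℂ))) =
        Complex.exp (Complex.I * ((a : ℂ) - (b : ℂ))) * Sfun Δ a b / Sfun Δ b a)
    {a b : ℝ} (ha : a ∈ Ddom Δ) (hb : b ∈ Ddom Δ) : Sfun Δ a b ≠ 0 := by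
  intro h
  have h2 := hΘ b hb a ha
  rw [h, div_zero] at h2
  exact Complex.exp_ne_zero _ h2

lemma hfac_of_hΘ {Δ : ℝ} {Θ : ℝ → ℝ → ℝ}
    (hΘ : ∀ a ∈ Ddom Δ, ∀ b ∈ Ddom Δ,
      Complex.exp (-(Complex.I * (Θ a b : ℂ))) =
        Complex.exp (Complex.I * ((a : ℂ) - (b : ℂ))) * Sfun Δ a b / Sfun Δ b a)
    {a b : ℝ} (ha : a ∈ Ddom Δ) (hb : b ∈ Ddom Δ) :
    Complex.exp (Complex.I * (a : ℂ)) * Sfun Δ a b /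
      (Complex.exp (Complex.I * (b : ℂ)) * Sfun Δ b a) =
      Complex.exp (-(Complex.I * ((Θ a b : ℝ) : ℂ))) := by
  rw [hΘ a ha b hb]
  have hSba := Sne hΘ hb ha
  have h1 : Complex.exp (Complex.I * ((a:ℂ) - b)) =
      Complex.exp (Complex.I * a) / Complex.exp (Complex.I * b) := by
    rw [← Complex.exp_sub]; ring_nf
  rw [h1]
  field_simp

lemma exp_neg_sum {α : Type*} [Fintype α] (t : α → ℝ) :
    Complex.exp (-(Complex.I * ((∑ k, t k : ℝ) : ℂ))) =
      ∏ k, Complex.exp (-(Complex.I * (t k : ℂ))) := by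
  rw [← Complex.exp_sum]
  congr 1
  push_cast
  rw [Finset.mul_sum, ← Finset.sum_neg_distrib]

lemma prodL_eq_prodM {m : ℕ} {c Δ : ℝ} (hΔ : Δ = (2 - c^2)/2) {Θ : ℝ → ℝ → ℝ}
    (hΘ : ∀ a ∈ Ddom Δ, ∀ b ∈ Ddom Δ,
      Complex.exp (-(Complex.I * (Θ a b : ℂ))) =
        Complex.exp (Complex.I * ((a : ℂ) - (b : ℂ))) * Sfun Δ a b / Sfun Δ b a)
    (hΘzero : Θ 0 0 = 0) (N : ℕ)
    {p : Fin (m+1) → ℝ} (hpD : ∀ j, p j ∈ Ddom Δ) {e0 : Fin (m+1)} (hp0 : p e0 = 0)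
    (hz1 : ∀ k, k ≠ e0 → Complex.exp (Complex.I * (p k : ℂ)) ≠ 1)
    (hBEe : Complex.exp (Complex.I * (N:ℂ) * (p e0 : ℂ)) =
      (-1:ℂ)^m * Complex.exp (-(Complex.I * ((∑ k, Θ (p e0) (p k) : ℝ) : ℂ)))) :
    ∏ k ∈ Finset.univ.erase e0, Lfun c (zOf p k) =
      ∏ k ∈ Finset.univ.erase e0, Mfun c (zOf p k) := by
  classical
  have hD0 : (0:ℝ) ∈ Ddom Δ := hp0 ▸ hpD e0
  have hone : Complex.exp (Complex.I * (N:ℂ) * (p e0 : ℂ)) = 1 := by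
    rw [hp0]; simp
  rw [hone, hp0, exp_neg_sum] at hBEe
  have hsplit : (∏ k : Fin (m+1), Complex.exp (-(Complex.I * ((Θ 0 (p k) : ℝ) : ℂ))))
      = ∏ k ∈ Finset.univ.erase e0, Complex.exp (-(Complex.I * ((Θ 0 (p k) : ℝ) : ℂ))) := by
    rw [← Finset.mul_prod_erase Finset.univ _ (Finset.mem_univ e0), hp0, hΘzero]
    simp
  rw [hsplit] at hBEe
  have hfork : ∀ k ∈ Finset.univ.erase e0,
      Complex.exp (-(Complex.I * ((Θ 0 (p k) : ℝ) : ℂ))) =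
        -(Mfun c (zOf p k) / Lfun c (zOf p k)) := by
    intro k hk
    have hk' : k ≠ e0 := (Finset.mem_erase.mp hk).1
    have hS : Sfun Δ (p k) 0 ≠ 0 := Sne hΘ (hpD k) hD0
    rw [hΘ 0 hD0 (p k) (hpD k)]
    exact MLkey hΔ (hz1 k hk') hS
  rw [Finset.prod_congr rfl hfork] at hBEe
  have hLne : ∀ k ∈ Finset.univ.erase e0, Lfun c (zOf p k) ≠ 0 := by
    intro k hk
    exact Lfun_ne hΔ (hz1 k (Finset.mem_erase.mp hk).1) (Sne hΘ (hpD k) hD0)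
  have hcard : (Finset.univ.erase e0).card = m := by
    rw [Finset.card_erase_of_mem (Finset.mem_univ e0), Finset.card_univ, Fintype.card_fin]
    omega
  have hnegprod : (∏ k ∈ Finset.univ.erase e0, -(Mfun c (zOf p k) / Lfun c (zOf p k)))
      = (-1:ℂ)^m * ∏ k ∈ Finset.univ.erase e0, (Mfun c (zOf p k) / Lfun c (zOf p k)) := by
    calc (∏ k ∈ Finset.univ.erase e0, -(Mfun c (zOf p k) / Lfun c (zOf p k)))
        = ∏ k ∈ Finset.univ.erase e0,
            ((-1) * (Mfun c (zOf p k) / Lfun c (zOf p k))) :=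
          Finset.prod_congr rfl (fun k _ => by ring)
      _ = (-1:ℂ)^m * ∏ k ∈ Finset.univ.erase e0, (Mfun c (zOf p k) / Lfun c (zOf p k)) := by
          rw [Finset.prod_mul_distrib, Finset.prod_const, hcard]
  rw [hnegprod, ← mul_assoc, ← mul_pow] at hBEe
  norm_num at hBEe
  have hLprod_ne : (∏ k ∈ Finset.univ.erase e0, Lfun c (zOf p k)) ≠ 0 :=
    Finset.prod_ne_zero_iff.2 hLne
  rw [eq_div_iff hLprod_ne, one_mul] at hBEe
  exact hBEe

lemma keyA {m : ℕ} (N : ℕ) (c Δ : ℝ) (x : ℕ → ℤ) (hx0 : x 0 = x (m+1) - N)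
    (p : Fin (m+1) → ℝ) (hp0 : p 0 = 0)
    (hAr : ∀ σ : Equiv.Perm (Fin (m+1)), Acoef Δ p (σ * (finRotate (m+1))⁻¹) =
      Acoef Δ p σ * Complex.exp (Complex.I * (N : ℂ) * (p (σ (Fin.last m)) : ℂ)))
    (hLM : ∏ k ∈ Finset.univ.erase (0 : Fin (m+1)), Lfun c (zOf p k) =
      ∏ k ∈ Finset.univ.erase (0 : Fin (m+1)), Mfun c (zOf p k))
    (ε : ℝ) :
    (∑ σ : Equiv.Perm (Fin (m+1)), Acoef Δ p σ *
        (rword c (zOf (Function.update p 0 ε)) σ (fun _ => true) *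
          Zword x (zOf (Function.update p 0 ε)) σ (fun _ => true))) +
      ∑ σ : Equiv.Perm (Fin (m+1)), Acoef Δ p σ *
        (rword c (zOf (Function.update p 0 ε)) σ (fun _ => false) *
          Zword x (zOf (Function.update p 0 ε)) σ (fun _ => false))
    = (∏ k ∈ Finset.univ.erase (0 : Fin (m+1)), Mfun c (zOf p k)) *
      ∑ σ : Equiv.Perm (Fin (m+1)), Acoef Δ p σ *
        ((Lfun c (Complex.exp (Complex.I * ε)) *
            (if σ (Fin.last m) = 0 then Complex.exp (-(Complex.I * N * ε)) else 1) +
          Mfun c (Complex.exp (Complex.I * ε))) *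
          ∏ k : Fin (m+1), zOf (Function.update p 0 ε) (σ k) ^ (x ((k : ℕ) + 1))) := by
  classical
  set ρ := finRotate (m+1) with hρ
  set zε := zOf (Function.update p 0 ε) with hzε
  set PM := ∏ k ∈ Finset.univ.erase (0 : Fin (m+1)), Mfun c (zOf p k) with hPM
  have hzne : ∀ j, zε j ≠ 0 := fun j => Complex.exp_ne_zero _
  have hze0 : zε 0 = Complex.exp (Complex.I * ε) := by
    rw [hzε]; show Complex.exp _ = _; rw [Function.update_self]
  have hzoth : ∀ j, j ≠ (0 : Fin (m+1)) → zε j = zOf p j := by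
    intro j hj; rw [hzε]; show Complex.exp _ = Complex.exp _; rw [Function.update_of_ne hj]
  have hρinv0 : ρ⁻¹ (0 : Fin (m+1)) = Fin.last m := by
    rw [hρ, ← rotate_last]; exact Equiv.symm_apply_apply _ _
  have hZF : ∀ σ : Equiv.Perm (Fin (m+1)), Zword x zε σ (fun _ => false) =
      ∏ k : Fin (m+1), zε (σ k) ^ (x ((k : ℕ) + 1)) := by
    intro σ; rw [Zword]; simp
  have hLprod : (∏ j : Fin (m+1), Lfun c (zε j)) =
      Lfun c (Complex.exp (Complex.I * ε)) * PM := by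
    rw [← Finset.mul_prod_erase Finset.univ _ (Finset.mem_univ (0 : Fin (m+1))), hze0]
    congr 1
    have hconv : (∏ j ∈ Finset.univ.erase (0 : Fin (m+1)), Lfun c (zε j)) =
        ∏ j ∈ Finset.univ.erase (0 : Fin (m+1)), Lfun c (zOf p j) :=
      Finset.prod_congr rfl (fun j hj => by rw [hzoth j (Finset.mem_erase.mp hj).1])
    rw [hconv]
    exact hLM
  have hMprod : (∏ j : Fin (m+1), Mfun c (zε j)) =
      Mfun c (Complex.exp (Complex.I * ε)) * PM := by
    rw [← Finset.mul_prod_erase Finset.univ _ (Finset.mem_univ (0 : Fin (m+1))), hze0]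
    congr 1
    exact Finset.prod_congr rfl (fun j hj => by rw [hzoth j (Finset.mem_erase.mp hj).1])
  have hκ : ∀ σ : Equiv.Perm (Fin (m+1)),
      Complex.exp (Complex.I * (N : ℂ) * (p (σ (Fin.last m)) : ℂ)) *
        zε (σ (Fin.last m)) ^ (-(N:ℤ)) =
      (if σ (Fin.last m) = 0 then Complex.exp (-(Complex.I * N * ε)) else 1) := by
    intro σ
    by_cases hj : σ (Fin.last m) = 0
    · rw [if_pos hj, hj, hp0, hze0, ← Complex.exp_int_mul, ← Complex.exp_add]
      congr 1
      push_cast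
      ring
    · rw [if_neg hj, hzoth _ hj]
      show Complex.exp _ * Complex.exp _ ^ _ = 1
      rw [← Complex.exp_int_mul, ← Complex.exp_add, ← Complex.exp_zero]
      congr 1
      push_cast
      ring
  have hsum1 : (∑ σ : Equiv.Perm (Fin (m+1)), Acoef Δ p σ *
        (rword c zε σ (fun _ => true) * Zword x zε σ (fun _ => true)))
      = ∑ σ : Equiv.Perm (Fin (m+1)), Acoef Δ p σ *
          ((Lfun c (Complex.exp (Complex.I * ε)) * PM) *
            ((if σ (Fin.last m) = 0 then Complex.exp (-(Complex.I * N * ε)) else 1) *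
              Zword x zε σ (fun _ => false))) := by
    calc (∑ σ : Equiv.Perm (Fin (m+1)), Acoef Δ p σ *
          (rword c zε σ (fun _ => true) * Zword x zε σ (fun _ => true)))
        = ∑ σ : Equiv.Perm (Fin (m+1)),
            (fun τ : Equiv.Perm (Fin (m+1)) => Acoef Δ p τ *
              ((Lfun c (Complex.exp (Complex.I * ε)) * PM) *
                (zε (τ 0) ^ (-(N:ℤ)) * Zword x zε (τ * ρ) (fun _ => false)))) σ := by
          refine Finset.sum_congr rfl fun σ _ => ?_
          rw [rword_true, hLprod, Zshift N x hx0 zε hzne σ]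
      _ = ∑ σ : Equiv.Perm (Fin (m+1)),
            (fun τ : Equiv.Perm (Fin (m+1)) => Acoef Δ p τ *
              ((Lfun c (Complex.exp (Complex.I * ε)) * PM) *
                (zε (τ 0) ^ (-(N:ℤ)) * Zword x zε (τ * ρ) (fun _ => false))))
              ((Equiv.mulRight ρ⁻¹) σ) :=
          (Equiv.sum_comp (Equiv.mulRight ρ⁻¹) _).symm
      _ = ∑ σ : Equiv.Perm (Fin (m+1)), Acoef Δ p σ *
            ((Lfun c (Complex.exp (Complex.I * ε)) * PM) *
              ((if σ (Fin.last m) = 0 then Complex.exp (-(Complex.I * N * ε)) else 1) *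
                Zword x zε σ (fun _ => false))) := by
          refine Finset.sum_congr rfl fun σ _ => ?_
          simp only [Equiv.coe_mulRight]
          rw [inv_mul_cancel_right,
            show (σ * ρ⁻¹) 0 = σ (Fin.last m) from by rw [Equiv.Perm.mul_apply, hρinv0],
            hAr σ, ← hκ σ]
          ring
  have hsum2 : (∑ σ : Equiv.Perm (Fin (m+1)), Acoef Δ p σ *
        (rword c zε σ (fun _ => false) * Zword x zε σ (fun _ => false)))
      = ∑ σ : Equiv.Perm (Fin (m+1)), Acoef Δ p σ *
          ((Mfun c (Complex.exp (Complex.I * ε)) * PM) * Zword x zε σ (fun _ => false)) := by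
    refine Finset.sum_congr rfl fun σ _ => ?_
    rw [rword_false, hMprod]
  rw [hsum1, hsum2, Finset.mul_sum, ← Finset.sum_add_distrib]
  refine Finset.sum_congr rfl fun σ _ => ?_
  rw [hZF σ]
  ring

/-- **Lemma 3.8: the limit of the contribution `T₀(ε)` of the two constant words in the
singular case `p₁ = 0`.** -/
theorem T0_limit_singular
    (N n : ℕ) (hN : 0 < N) (hn : 0 < n)
    (c : ℝ) (hc : 0 < c) (Δ : ℝ) (hΔ : Δ = (2 - c ^ 2) / 2)
    (Θ : ℝ → ℝ → ℝ)
    (hΘcont : ContinuousOn (fun q : ℝ × ℝ => Θ q.1 q.2) (Ddom Δ ×ˢ Ddom Δ))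
    (hΘzero : Θ 0 0 = 0)
    (hΘ : ∀ a ∈ Ddom Δ, ∀ b ∈ Ddom Δ,
      Complex.exp (-(Complex.I * (Θ a b : ℂ))) =
        Complex.exp (Complex.I * ((a : ℂ) - (b : ℂ))) * Sfun Δ a b / Sfun Δ b a)
    (p : Fin n → ℝ) (hpD : ∀ j, p j ∈ Ddom Δ)
    (hp0 : p ⟨0, hn⟩ = 0)
    (hdistinct : Function.Injective p)
    (hnonzero : ∀ j, j ≠ ⟨0, hn⟩ → p j ≠ 0)
    (hBE : ∀ j, Complex.exp (Complex.I * (N : ℂ) * (p j : ℂ)) =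
      (-1 : ℂ) ^ (n - 1) *
        Complex.exp (-(Complex.I * ((∑ k, Θ (p j) (p k) : ℝ) : ℂ))))
    (x : ℕ → ℤ) (hx0 : x 0 = x n - N)
    (hxmono : ∀ i j, i < j → j ≤ n → x i < x j)
    (hx1 : 1 ≤ x 1) (hxN : x n ≤ (N : ℤ))
    :
    Filter.Tendsto
      (fun ε : ℝ =>
        (∑ σ : Equiv.Perm (Fin n), Acoef Δ p σ *
            (rword c (zOf (Function.update p ⟨0, hn⟩ ε)) σ (fun _ => true) *
              Zword x (zOf (Function.update p ⟨0, hn⟩ ε)) σ (fun _ => true))) +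
          ∑ σ : Equiv.Perm (Fin n), Acoef Δ p σ *
            (rword c (zOf (Function.update p ⟨0, hn⟩ ε)) σ (fun _ => false) *
              Zword x (zOf (Function.update p ⟨0, hn⟩ ε)) σ (fun _ => false)))
      (nhdsWithin 0 (Set.range p)ᶜ)
      (nhds
        ((2 - (c : ℂ) ^ 2) *
            (∏ k ∈ Finset.univ.erase (⟨0, hn⟩ : Fin n), Mfun c (zOf p k)) *
            (∑ σ : Equiv.Perm (Fin n), Acoef Δ p σ *
              ∏ k : Fin n, zOf p (σ k) ^ (x ((k : ℕ) + 1))) +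
          (c : ℂ) ^ 2 * (N : ℂ) *
            (∏ k ∈ Finset.univ.erase (⟨0, hn⟩ : Fin n), Mfun c (zOf p k)) *
            ∑ σ ∈ Finset.univ.filter
                (fun σ : Equiv.Perm (Fin n) => σ ⟨n - 1, by omega⟩ = ⟨0, hn⟩),
              Acoef Δ p σ * ∏ k : Fin n, zOf p (σ k) ^ (x ((k : ℕ) + 1)))) := by
  classical
  obtain ⟨m, rfl⟩ : ∃ m, n = m + 1 := ⟨n - 1, by omega⟩
  have he0 : (⟨0, hn⟩ : Fin (m+1)) = 0 := by apply Fin.ext; simp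
  have hlaste : (⟨m + 1 - 1, by omega⟩ : Fin (m+1)) = Fin.last m := rfl
  simp only [he0, hlaste] at hp0 hnonzero ⊢
  -- basic facts
  have hπ := Real.pi_pos
  have hD0 : (0:ℝ) ∈ Ddom Δ := hp0 ▸ hpD 0
  have hμ : 0 ≤ muD Δ := by
    unfold muD; split_ifs
    · exact Real.arccos_nonneg _
    · exact le_rfl
  have hDsub : ∀ t ∈ Ddom Δ, |t| < Real.pi := by
    intro t ht
    obtain ⟨h1, h2⟩ := ht
    rw [abs_lt]; constructor <;> linarith
  have hz1 : ∀ k : Fin (m+1), k ≠ 0 → Complex.exp (Complex.I * (p k : ℂ)) ≠ 1 := by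
    intro k hk
    refine exp_I_ne_one (hnonzero k hk) ?_
    have := hDsub _ (hpD k); linarith
  have hSneP : ∀ a b : Fin (m+1), Sfun Δ (p a) (p b) ≠ 0 :=
    fun a b => Sne hΘ (hpD a) (hpD b)
  have hfacP : ∀ a b : Fin (m+1),
      Complex.exp (Complex.I * (p a : ℂ)) * Sfun Δ (p a) (p b) /
        (Complex.exp (Complex.I * (p b : ℂ)) * Sfun Δ (p b) (p a)) =
        Complex.exp (-(Complex.I * ((Θ (p a) (p b) : ℝ) : ℂ))) :=
    fun a b => hfac_of_hΘ hΘ (hpD a) (hpD b)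
  have hAr : ∀ σ : Equiv.Perm (Fin (m+1)), Acoef Δ p (σ * (finRotate (m+1))⁻¹) =
      Acoef Δ p σ * Complex.exp (Complex.I * (N : ℂ) * (p (σ (Fin.last m)) : ℂ)) :=
    Aratio N Δ Θ p hSneP hfacP hBE
  have hLM : ∏ k ∈ Finset.univ.erase (0 : Fin (m+1)), Lfun c (zOf p k) =
      ∏ k ∈ Finset.univ.erase (0 : Fin (m+1)), Mfun c (zOf p k) :=
    prodL_eq_prodM hΔ hΘ hΘzero N hpD hp0 hz1 (hBE 0)
  set PM := ∏ k ∈ Finset.univ.erase (0 : Fin (m+1)), Mfun c (zOf p k) with hPM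
  -- step A : rewrite the function
  refine Filter.Tendsto.congr
    (fun ε => (keyA N c Δ x hx0 p hp0 hAr hLM ε).symm) ?_
  -- rewrite the limit value
  have htarget :
      (2 - (c : ℂ) ^ 2) * PM *
          (∑ σ : Equiv.Perm (Fin (m+1)), Acoef Δ p σ *
            ∏ k : Fin (m+1), zOf p (σ k) ^ (x ((k : ℕ) + 1))) +
        (c : ℂ) ^ 2 * (N : ℂ) * PM *
          (∑ σ ∈ Finset.univ.filter
              (fun σ : Equiv.Perm (Fin (m+1)) => σ (Fin.last m) = 0),
            Acoef Δ p σ * ∏ k : Fin (m+1), zOf p (σ k) ^ (x ((k : ℕ) + 1)))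
      = PM * ∑ σ : Equiv.Perm (Fin (m+1)), Acoef Δ p σ *
          ((((2:ℂ) - (c:ℂ)^2) +
            (if σ (Fin.last m) = 0 then (c:ℂ)^2 * (N:ℂ) else 0)) *
            ∏ k : Fin (m+1), zOf p (σ k) ^ (x ((k : ℕ) + 1))) := by
    have hexp : ∀ σ : Equiv.Perm (Fin (m+1)),
        Acoef Δ p σ * ((((2:ℂ) - (c:ℂ)^2) +
            (if σ (Fin.last m) = 0 then (c:ℂ)^2 * (N:ℂ) else 0)) *
            ∏ k : Fin (m+1), zOf p (σ k) ^ (x ((k : ℕ) + 1)))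
          = ((2:ℂ) - (c:ℂ)^2) *
              (Acoef Δ p σ * ∏ k : Fin (m+1), zOf p (σ k) ^ (x ((k : ℕ) + 1))) +
            (if σ (Fin.last m) = 0 then
              (c:ℂ)^2 * (N:ℂ) *
                (Acoef Δ p σ * ∏ k : Fin (m+1), zOf p (σ k) ^ (x ((k : ℕ) + 1)))
              else 0) := by
      intro σ
      by_cases h : σ (Fin.last m) = 0 <;> simp [h] <;> ring
    rw [Finset.sum_congr rfl (fun σ _ => hexp σ), Finset.sum_add_distrib,
      ← Finset.mul_sum, ← Finset.sum_filter, ← Finset.mul_sum, mul_add]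
    ring
  rw [htarget]
  -- eventually facts
  have h0mem : (0:ℝ) ∈ Set.range p := ⟨(0 : Fin (m+1)), hp0⟩
  have hev1 : ∀ᶠ (ε : ℝ) in nhdsWithin (0:ℝ) (Set.range p)ᶜ,
      Complex.exp (Complex.I * (ε:ℂ)) ≠ 1 := by
    have hsmall : ∀ᶠ (ε : ℝ) in nhds (0:ℝ), |ε| < 2*Real.pi := by
      filter_upwards [Metric.ball_mem_nhds (0:ℝ) (by linarith : (0:ℝ) < 2*Real.pi)] with ε hε
      simpa [Real.dist_eq] using hε
    filter_upwards [self_mem_nhdsWithin, hsmall.filter_mono nhdsWithin_le_nhds] with ε h1 h2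
    exact exp_I_ne_one (fun h0 => h1 (h0 ▸ h0mem)) h2
  have hcoe : Filter.Tendsto (fun ε : ℝ => (ε:ℂ)) (nhdsWithin (0:ℝ) (Set.range p)ᶜ)
      (nhdsWithin (0:ℂ) {(0:ℂ)}ᶜ) := by
    refine tendsto_nhdsWithin_of_tendsto_nhds_of_eventually_within _
      ((Complex.continuous_ofReal.tendsto 0).mono_left nhdsWithin_le_nhds) ?_
    filter_upwards [self_mem_nhdsWithin] with ε h1
    simp only [Set.mem_compl_iff, Set.mem_singleton_iff]
    exact Complex.ofReal_ne_zero.mpr (fun h0 => h1 (h0 ▸ h0mem))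
  -- the limit
  refine Filter.Tendsto.const_mul PM ?_
  refine tendsto_finset_sum _ (fun σ _ => ?_)
  refine Filter.Tendsto.const_mul (Acoef Δ p σ) (Filter.Tendsto.mul ?_ ?_)
  · -- the H factor
    by_cases hs : σ (Fin.last m) = 0
    · simp only [if_pos hs]
      have heq : ∀ᶠ (ε : ℝ) in nhdsWithin (0:ℝ) (Set.range p)ᶜ,
          ((1:ℂ) + Complex.exp (-(Complex.I * (N:ℂ) * (ε:ℂ)))) +
            (c:ℂ)^2 * ((Complex.exp (((1:ℂ) - (N:ℂ)) * Complex.I * (ε:ℂ)) - 1) /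
              (1 - Complex.exp (Complex.I * (ε:ℂ))))
          = Lfun c (Complex.exp (Complex.I * (ε:ℂ))) *
              Complex.exp (-(Complex.I * (N:ℂ) * (ε:ℂ))) +
            Mfun c (Complex.exp (Complex.I * (ε:ℂ))) := by
        filter_upwards [hev1] with ε h1
        rw [LM_sing h1, show Complex.exp (Complex.I * (ε:ℂ)) *
            Complex.exp (-(Complex.I * (N:ℂ) * (ε:ℂ)))
            = Complex.exp (((1:ℂ) - (N:ℂ)) * Complex.I * (ε:ℂ)) from by
          rw [← Complex.exp_add]; congr 1; ring]
        rw [mul_div_assoc]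
      have T1 : Filter.Tendsto
          (fun ε : ℝ => (1:ℂ) + Complex.exp (-(Complex.I * (N:ℂ) * (ε:ℂ))))
          (nhdsWithin (0:ℝ) (Set.range p)ᶜ) (nhds 2) := by
        have hcont : Continuous fun ε : ℝ =>
            (1:ℂ) + Complex.exp (-(Complex.I * (N:ℂ) * (ε:ℂ))) := by
          apply continuous_const.add
          apply Complex.continuous_exp.comp
          exact (continuous_const.mul Complex.continuous_ofReal).neg
        have h4 := (hcont.tendsto 0).mono_left
          (nhdsWithin_le_nhds : nhdsWithin (0:ℝ) (Set.range p)ᶜ ≤ nhds 0)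
        rw [show (2:ℂ) = 1 + 1 by norm_num]
        simpa using h4
      have T2 : Filter.Tendsto
          (fun ε : ℝ => (c:ℂ)^2 * ((Complex.exp (((1:ℂ) - (N:ℂ)) * Complex.I * (ε:ℂ)) - 1) /
            (1 - Complex.exp (Complex.I * (ε:ℂ)))))
          (nhdsWithin (0:ℝ) (Set.range p)ᶜ) (nhds ((c:ℂ)^2 * ((N:ℂ) - 1))) :=
        Filter.Tendsto.const_mul _ ((gtend N).comp hcoe)
      have T3 := T1.add T2
      rw [show (2:ℂ) + (c:ℂ)^2 * ((N:ℂ) - 1)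
          = ((2:ℂ) - (c:ℂ)^2) + (c:ℂ)^2 * (N:ℂ) from by ring] at T3
      exact T3.congr' heq
    · simp only [if_neg hs]
      have heq : ∀ᶠ (ε : ℝ) in nhdsWithin (0:ℝ) (Set.range p)ᶜ,
          ((2:ℂ) - (c:ℂ)^2)
          = Lfun c (Complex.exp (Complex.I * (ε:ℂ))) * 1 +
            Mfun c (Complex.exp (Complex.I * (ε:ℂ))) := by
        filter_upwards [hev1] with ε h1
        rw [mul_one, LM_sum h1]
      have T0 : Filter.Tendsto (fun _ : ℝ => (2:ℂ) - (c:ℂ)^2)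
          (nhdsWithin (0:ℝ) (Set.range p)ᶜ) (nhds (((2:ℂ) - (c:ℂ)^2) + 0)) := by
        rw [add_zero]; exact tendsto_const_nhds
      exact T0.congr' heq
  · -- the Z factor
    refine tendsto_finset_prod _ (fun k _ => ?_)
    by_cases hk : σ k = 0
    · have hfe : ∀ ε : ℝ, zOf (Function.update p 0 ε) (σ k) ^ (x ((k:ℕ) + 1))
          = Complex.exp ((x ((k:ℕ) + 1) : ℂ) * (Complex.I * (ε:ℂ))) := by
        intro ε
        rw [hk]
        show Complex.exp (Complex.I * ((Function.update p 0 ε 0 : ℝ) : ℂ)) ^ _ = _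
        rw [Function.update_self, ← Complex.exp_int_mul]
      have hval : zOf p (σ k) ^ (x ((k:ℕ) + 1)) = 1 := by
        rw [hk]
        show Complex.exp (Complex.I * ((p 0 : ℝ) : ℂ)) ^ _ = 1
        rw [hp0]
        simp
      rw [hval]
      have hcont : Continuous fun ε : ℝ =>
          Complex.exp ((x ((k:ℕ) + 1) : ℂ) * (Complex.I * (ε:ℂ))) := by
        apply Complex.continuous_exp.comp
        exact continuous_const.mul (continuous_const.mul Complex.continuous_ofReal)
      have hT := (hcont.tendsto 0).mono_left
        (nhdsWithin_le_nhds : nhdsWithin (0:ℝ) (Set.range p)ᶜ ≤ nhds 0)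
      simp only [Complex.ofReal_zero, mul_zero, Complex.exp_zero] at hT
      exact Filter.Tendsto.congr (fun ε => (hfe ε).symm) hT
    · have hfe : ∀ ε : ℝ, zOf (Function.update p 0 ε) (σ k) ^ (x ((k:ℕ) + 1))
          = zOf p (σ k) ^ (x ((k:ℕ) + 1)) := by
        intro ε
        show Complex.exp (Complex.I * ((Function.update p 0 ε (σ k) : ℝ) : ℂ)) ^ _ = _
        rw [Function.update_of_ne hk]
        rfl
      exact Filter.Tendsto.congr (fun ε => (hfe ε).symm) tendsto_const_nhds
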